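/- For a differentiable φ with λ-Lipschitz gradient, backtracking line search h = h̄, h̄β, h̄β², … (β ∈ (0,1)) terminated at the first h satisfying the Armijo condition φ(x) − φ(x − h∇φ(x)) ≥ hγ‖∇φ(x)‖² returns a step size h ≥ min{(2β/λ)(1 − γ), h̄}, and hence φ(x) − φ(x₊) ≥ min{(2/λ)βγ(1 − γ), h̄γ}·‖∇φ(x)‖². -/

import Mathlib

open intervalIntegral

lemma descent_lemma
    {E : Type*} [NormedAddCommGroup E] [InnerProductSpace ℝ E] [CompleteSpace E]
    (φ : E → ℝ) (hφ : Differentiable ℝ φ) (lam : ℝ) (hlam : 0 < lam)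
    (hLip : ∀ u v : E, ‖gradient φ u - gradient φ v‖ ≤ lam * ‖u - v‖)
    (x d : E) :
    φ (x + d) ≤ φ x + inner ℝ (gradient φ x) d + lam / 2 * ‖d‖ ^ 2 := by
  set g : ℝ → E := fun t => gradient φ (x + t • d) with hg
  have hgradcont : Continuous (gradient φ) := by
    have : LipschitzWith lam.toNNReal (gradient φ) :=
      LipschitzWith.of_dist_le_mul (fun u v => by
        simpa [dist_eq_norm, Real.coe_toNNReal lam hlam.le] using hLip u v)
    exact this.continuous
  have hgcont : Continuous g := hgradcont.comp (by continuity)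
  have hderiv : ∀ t ∈ Set.uIcc (0:ℝ) 1,
      HasDerivAt (fun t : ℝ => φ (x + t • d)) (inner ℝ (g t) d) t := by
    intro t _
    have h1 : HasFDerivAt φ (InnerProductSpace.toDual ℝ E (g t)) (x + t • d) :=
      ((hφ (x + t • d)).hasGradientAt).hasFDerivAt
    have h2 : HasDerivAt (fun t : ℝ => x + t • d) d t :=
      by simpa using ((hasDerivAt_id t).smul_const d).const_add x
    have h3 := h1.comp_hasDerivAt t h2
    simp only [InnerProductSpace.toDual_apply_apply] at h3
    exact h3
  have hint : ∫ t in (0:ℝ)..1, inner ℝ (g t) d = φ (x + d) - φ x := by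
    have := integral_eq_sub_of_hasDerivAt hderiv
      ((hgcont.inner continuous_const).intervalIntegrable 0 1)
    simpa using this
  have hbound : ∀ t ∈ Set.Icc (0:ℝ) 1,
      (inner ℝ (g t) d : ℝ) ≤ inner ℝ (g 0) d + lam * ‖d‖ ^ 2 * t := by
    intro t ht
    have h1 : (inner ℝ (g t) d : ℝ) - inner ℝ (g 0) d = inner ℝ (g t - g 0) d := by
      rw [inner_sub_left]
    have h2 : (inner ℝ (g t - g 0) d : ℝ) ≤ ‖g t - g 0‖ * ‖d‖ :=
      real_inner_le_norm _ _
    have h3 : ‖g t - g 0‖ ≤ lam * (t * ‖d‖) := by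
      have := hLip (x + t • d) (x + (0:ℝ) • d)
      simpa [hg, norm_smul, abs_of_nonneg ht.1] using this
    nlinarith [norm_nonneg d, norm_nonneg (g t - g 0), ht.1, hlam.le]
  have hmono : ∫ t in (0:ℝ)..1, inner ℝ (g t) d ≤
      ∫ t in (0:ℝ)..1, (inner ℝ (g 0) d + lam * ‖d‖ ^ 2 * t) := by
    apply integral_mono_on zero_le_one
      ((hgcont.inner continuous_const).intervalIntegrable 0 1)
      ((by continuity : Continuous fun t : ℝ => (inner ℝ (g 0) d : ℝ) + lam * ‖d‖ ^ 2 * t).intervalIntegrable 0 1)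
      hbound
  have hval : ∫ t in (0:ℝ)..1, ((inner ℝ (g 0) d : ℝ) + lam * ‖d‖ ^ 2 * t) =
      inner ℝ (g 0) d + lam * ‖d‖ ^ 2 / 2 := by
    have h1 : IntervalIntegrable (fun _t : ℝ => (inner ℝ (g 0) d : ℝ))
        MeasureTheory.volume 0 1 := intervalIntegrable_const
    have h2 : IntervalIntegrable (fun t : ℝ => lam * ‖d‖ ^ 2 * t)
        MeasureTheory.volume 0 1 := (continuous_const.mul continuous_id').intervalIntegrable 0 1
    rw [integral_add h1 h2, integral_const_mul, integral_id, integral_const]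
    simp
    ring
  have hg0 : g 0 = gradient φ x := by simp [hg]
  rw [hint, hval, hg0] at hmono
  nlinarith [hmono]



/-- **Armijo backtracking returns a not-too-small step.** For a differentiable `φ` with
`lam`-Lipschitz gradient, backtracking `h = h̄, h̄β, h̄β², …` terminated at the first
index `i` at which the Armijo condition
`φ x - φ (x - h • ∇φ x) ≥ h γ ‖∇φ x‖²` holds returns a step size
`h̄ β^i ≥ min {(2β/lam)(1 - γ), h̄}`, and hence
`φ x - φ x₊ ≥ min {(2/lam) β γ (1 - γ), h̄ γ} ‖∇φ x‖²`. -/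
theorem armijo_backtracking_step_bound
    {E : Type*} [NormedAddCommGroup E] [InnerProductSpace ℝ E] [CompleteSpace E]
    (φ : E → ℝ) (hφ : Differentiable ℝ φ) (lam : ℝ) (hlam : 0 < lam)
    (hLip : ∀ u v : E, ‖gradient φ u - gradient φ v‖ ≤ lam * ‖u - v‖)
    (γ β hbar : ℝ) (hγ0 : 0 < γ) (hγ1 : γ < 1) (hβ0 : 0 < β) (hβ1 : β < 1)
    (hhbar : 0 < hbar) (x : E) (i : ℕ)
    (hi : φ x - φ (x - (hbar * β ^ i) • gradient φ x) ≥
      (hbar * β ^ i) * γ * ‖gradient φ x‖ ^ 2)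
    (hfail : ∀ j < i, ¬ (φ x - φ (x - (hbar * β ^ j) • gradient φ x) ≥
      (hbar * β ^ j) * γ * ‖gradient φ x‖ ^ 2)) :
    hbar * β ^ i ≥ min (2 * β / lam * (1 - γ)) hbar ∧
    φ x - φ (x - (hbar * β ^ i) • gradient φ x) ≥
      min (2 / lam * β * γ * (1 - γ)) (hbar * γ) * ‖gradient φ x‖ ^ 2 := by
  set g := gradient φ x with hgdef
  have armijo_ok : ∀ h : ℝ, 0 ≤ h → h * lam ≤ 2 * (1 - γ) →
      φ x - φ (x - h • g) ≥ h * γ * ‖g‖ ^ 2 := by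
    intro h hh hle
    have hd := descent_lemma φ hφ lam hlam hLip x (-(h • g))
    have hx : x + -(h • g) = x - h • g := by abel
    have hin : (inner ℝ g (-(h • g)) : ℝ) = -(h * ‖g‖ ^ 2) := by
      rw [inner_neg_right, real_inner_smul_right, real_inner_self_eq_norm_sq]
    have hn : ‖-(h • g)‖ ^ 2 = h ^ 2 * ‖g‖ ^ 2 := by
      rw [norm_neg, norm_smul, mul_pow, Real.norm_eq_abs, sq_abs]
    rw [hx, hin, hn] at hd
    have key : 0 ≤ h * ‖g‖ ^ 2 * (2 * (1 - γ) - h * lam) :=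
      mul_nonneg (mul_nonneg hh (sq_nonneg _)) (by linarith)
    nlinarith [sq_nonneg ‖g‖]
  have part1 : hbar * β ^ i ≥ min (2 * β / lam * (1 - γ)) hbar := by
    rcases Nat.eq_zero_or_pos i with h0 | hpos
    · subst h0; simpa using min_le_right (2 * β / lam * (1 - γ)) hbar
    · obtain ⟨k, rfl⟩ := Nat.exists_eq_add_of_lt hpos
      simp only [Nat.zero_add] at *
      have hfk := hfail k (Nat.lt_succ_self k)
      have hpk : 0 < hbar * β ^ k := by positivity
      have hbig : (hbar * β ^ k) * lam > 2 * (1 - γ) := by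
        by_contra hcon
        push_neg at hcon
        exact hfk (by simpa [mul_assoc] using armijo_ok (hbar * β ^ k) hpk.le hcon)
      have : hbar * β ^ k > 2 * (1 - γ) / lam := (div_lt_iff₀ hlam).mpr (by linarith)
      calc hbar * β ^ (k + 1) = β * (hbar * β ^ k) := by ring
        _ ≥ β * (2 * (1 - γ) / lam) := by nlinarith
        _ = 2 * β / lam * (1 - γ) := by ring
        _ ≥ min (2 * β / lam * (1 - γ)) hbar := min_le_left _ _
  refine ⟨part1, ?_⟩
  have hmin : min (2 / lam * β * γ * (1 - γ)) (hbar * γ) =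
      min (2 * β / lam * (1 - γ)) hbar * γ := by
    rw [min_mul_of_nonneg _ _ hγ0.le]
    congr 1
    ring
  have h2 : min (2 * β / lam * (1 - γ)) hbar * γ ≤ (hbar * β ^ i) * γ :=
    mul_le_mul_of_nonneg_right part1 hγ0.le
  calc min (2 / lam * β * γ * (1 - γ)) (hbar * γ) * ‖g‖ ^ 2
      ≤ (hbar * β ^ i) * γ * ‖g‖ ^ 2 := by
        apply mul_le_mul_of_nonneg_right _ (sq_nonneg _)
        rw [hmin]; exact h2
    _ ≤ φ x - φ (x - (hbar * β ^ i) • g) := hi
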